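/- For every p > 0 the equation y = p·log(1 + y/p) + log 2 has a unique positive solution y₀. Equivalently, the equation e^{−y}(1 + y/p)^p = 1/2 has a unique solution y > 0. -/

import Mathlib

open Real

/-- For every `p > 0` the equation `y = p log(1 + y/p) + log 2` has a unique positive
solution; equivalently, `e^{-y} (1 + y/p)^p = 1/2` has a unique positive solution. -/
theorem stmt13 (p : ℝ) (hp : 0 < p) :
    (∃! y : ℝ, 0 < y ∧ y = p * Real.log (1 + y/p) + Real.log 2) ∧
    (∃! y : ℝ, 0 < y ∧ Real.exp (-y) * (1 + y/p) ^ p = 1/2) := by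
  have hlog2 : 0 < Real.log 2 := Real.log_pos one_lt_two
  set g : ℝ → ℝ := fun y => y - p * Real.log (1 + y/p) with hg
  have hpos : ∀ y : ℝ, 0 ≤ y → 0 < 1 + y/p := by
    intro y hy; positivity
  -- strict monotonicity of g on [0, ∞)
  have hmono : ∀ a b : ℝ, 0 ≤ a → a < b → g a < g b := by
    intro a b ha hab
    have hpa : 0 < p + a := by linarith
    have hpb : 0 < p + b := by linarith
    have hx : 0 < (p + b) / (p + a) := by positivity
    have hne : (p + b) / (p + a) ≠ 1 := by
      intro h
      have := (div_eq_one_iff_eq hpa.ne').mp h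
      linarith
    have h1 := Real.log_lt_sub_one_of_pos hx hne
    have hlogdiv : Real.log ((p+b)/(p+a))
        = Real.log (1 + b/p) - Real.log (1 + a/p) := by
      have e1 : 1 + b/p = (p+b)/p := by field_simp
      have e2 : 1 + a/p = (p+a)/p := by field_simp
      rw [Real.log_div hpb.ne' hpa.ne', e1, e2, Real.log_div hpb.ne' hp.ne',
        Real.log_div hpa.ne' hp.ne']
      ring
    have hsub : (p+b)/(p+a) - 1 = (b-a)/(p+a) := by field_simp; ring
    have h2 : Real.log (1 + b/p) - Real.log (1 + a/p) < (b - a)/(p+a) := by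
      rw [← hlogdiv]; linarith
    have h3 : p * (Real.log (1 + b/p) - Real.log (1 + a/p)) < p * ((b - a)/(p+a)) :=
      mul_lt_mul_of_pos_left h2 hp
    have h4 : p * ((b - a) / (p + a)) ≤ b - a := by
      rw [mul_comm, div_mul_eq_mul_div, div_le_iff₀ hpa]
      nlinarith
    simp only [hg]
    nlinarith
  -- upper bound on p * log(1+y/p)
  have hub : ∀ y : ℝ, 0 ≤ y →
      p * Real.log (1 + y/p) ≤ y/2 - p/2 + p * Real.log 2 := by
    intro y hy
    have h0 : 0 < (1 + y/p)/2 := by positivity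
    have h := Real.log_le_sub_one_of_pos h0
    have hld : Real.log ((1 + y/p)/2) = Real.log (1 + y/p) - Real.log 2 :=
      Real.log_div (hpos y hy).ne' two_ne_zero
    rw [hld] at h
    have h' := mul_le_mul_of_nonneg_left h hp.le
    have hpy : p * (1 + y/p) = p + y := by field_simp
    nlinarith
  -- existence via IVT on [0, b0]
  set b0 : ℝ := 2*(1+p)*Real.log 2 with hb0
  have hb0pos : 0 < b0 := by positivity
  have hgb0 : Real.log 2 ≤ g b0 := by
    have := hub b0 hb0pos.le
    simp only [hg]
    nlinarith
  have hg0 : g 0 = 0 := by simp [hg]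
  have hcont : ContinuousOn g (Set.Icc 0 b0) := by
    apply ContinuousOn.sub continuousOn_id
    apply ContinuousOn.mul continuousOn_const
    apply ContinuousOn.log
    · exact continuousOn_const.add (continuousOn_id.div_const p)
    · intro x hx
      exact (hpos x hx.1).ne'
  have hmem : Real.log 2 ∈ Set.Icc (g 0) (g b0) := by
    rw [hg0]; exact ⟨hlog2.le, hgb0⟩
  obtain ⟨y₀, hy₀mem, hgy₀⟩ := intermediate_value_Icc hb0pos.le hcont hmem
  have hy₀pos : 0 < y₀ := by
    rcases lt_or_eq_of_le hy₀mem.1 with h | h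
    · exact h
    · exfalso; rw [← h, hg0] at hgy₀; linarith
  -- uniqueness helper
  have huniq : ∀ y : ℝ, 0 < y → g y = Real.log 2 → y = y₀ := by
    intro y hy hgy
    by_contra hne
    rcases lt_or_gt_of_ne hne with h | h
    · have := hmono y y₀ hy.le h; rw [hgy, hgy₀] at this; exact lt_irrefl _ this
    · have := hmono y₀ y hy₀pos.le h; rw [hgy, hgy₀] at this; exact lt_irrefl _ this
  have hfirst : ∃! y : ℝ, 0 < y ∧ y = p * Real.log (1 + y/p) + Real.log 2 := by
    refine ⟨y₀, ⟨hy₀pos, ?_⟩, ?_⟩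
    · simp only [hg] at hgy₀; linarith
    · rintro y ⟨hy, heq⟩
      exact huniq y hy (by simp only [hg]; linarith)
  -- equivalence of the two equations
  have hiff : ∀ y : ℝ, 0 < y →
      (Real.exp (-y) * (1 + y/p) ^ p = 1/2 ↔ g y = Real.log 2) := by
    intro y hy
    have hypos := hpos y hy.le
    have hr : (1 + y/p) ^ p = Real.exp (Real.log (1 + y/p) * p) :=
      Real.rpow_def_of_pos hypos p
    have hhalf : (1/2 : ℝ) = Real.exp (-(Real.log 2)) := by
      rw [Real.exp_neg, Real.exp_log two_pos]; norm_num
    rw [hr, ← Real.exp_add, hhalf, Real.exp_eq_exp]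
    constructor
    · intro h; simp only [hg]; linarith
    · intro h; simp only [hg] at h; linarith
  refine ⟨hfirst, ⟨y₀, ⟨hy₀pos, ?_⟩, ?_⟩⟩
  · exact (hiff y₀ hy₀pos).mpr hgy₀
  · rintro y ⟨hy, heq⟩
    exact huniq y hy ((hiff y hy).mp heq)
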